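/- Let A1 be the 2×2 matrix [[-G_0u(μ_a+ψ), 0], [b_f ψ, -σ-μ_fu]] and consider the 3×3 Metzler matrix A_s1 = [[-G_0u(μ_a+ψ), 0, φ_u/G_0u], [b_f ψ, -σ-μ_fu, 0], [0, σ, -μ_fu]]. Then the Schur complement of A1 in A_s1, namely D1 - C1 A1^{-1} B1 with B1 = (φ_u/G_0u, 0)^T, C1 = (0, σ), D1 = (-μ_fu), equals -μ_fu (1 - 1/G_0u), which is negative when G_0u > 1. -/

import Mathlib

open Matrix

theorem schur_complement_DFE_uninfected_block
    (μ_a ψ b_f σ μ_fu φ_u : ℝ)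
    (hμa : 0 < μ_a) (hψ : 0 < ψ) (hbf : 0 < b_f) (hσ : 0 < σ)
    (hμfu : 0 < μ_fu) (hφu : 0 < φ_u)
    (G_0u : ℝ)
    (hG : G_0u = b_f * (ψ / (μ_a + ψ)) * (σ / (σ + μ_fu)) * (φ_u / μ_fu)) :
    let A1 : Matrix (Fin 2) (Fin 2) ℝ := !![-(G_0u * (μ_a + ψ)), 0; b_f * ψ, -σ - μ_fu]
    let B1 : Matrix (Fin 2) (Fin 1) ℝ := !![φ_u / G_0u; 0]
    let C1 : Matrix (Fin 1) (Fin 2) ℝ := !![0, σ]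
    let D1 : Matrix (Fin 1) (Fin 1) ℝ := !![-μ_fu]
    (D1 - C1 * A1⁻¹ * B1) 0 0 = -μ_fu * (1 - 1 / G_0u) ∧
    (1 < G_0u → (D1 - C1 * A1⁻¹ * B1) 0 0 < 0) := by
  intro A1 B1 C1 D1
  have hG0 : 0 < G_0u := by
    rw [hG]
    positivity
  have hmain : (D1 - C1 * A1⁻¹ * B1) 0 0 = -μ_fu * (1 - 1 / G_0u) := by
    have hdet : A1.det = G_0u * (μ_a + ψ) * (σ + μ_fu) := by
      simp [A1, Matrix.det_fin_two_of]; ring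
    have hinv : A1⁻¹ = (G_0u * (μ_a + ψ) * (σ + μ_fu))⁻¹ •
        !![-σ - μ_fu, 0; -(b_f * ψ), -(G_0u * (μ_a + ψ))] := by
      rw [Matrix.inv_def, hdet]
      congr 1
      · simp [Ring.inverse_eq_inv']
      show Matrix.adjugate !![-(G_0u * (μ_a + ψ)), 0; b_f * ψ, -σ - μ_fu] = _
      rw [Matrix.adjugate_fin_two]
      norm_num
    rw [hinv]
    simp [D1, C1, B1, Matrix.mul_apply, Fin.sum_univ_succ]
    have h1 : μ_a + ψ ≠ 0 := by positivity
    have h2 : σ + μ_fu ≠ 0 := by positivity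
    have h3 : G_0u ≠ 0 := ne_of_gt hG0
    have hkey : b_f * ψ * σ * φ_u = G_0u * (μ_a + ψ) * (σ + μ_fu) * μ_fu := by
      rw [hG]; field_simp
    field_simp
    nlinarith [hkey]
  refine ⟨hmain, fun h1G => ?_⟩
  rw [hmain]
  have : 0 < 1 - 1 / G_0u := by
    have : 1 / G_0u < 1 := by
      rw [div_lt_one hG0]; exact h1G
    linarith
  nlinarith
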